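/- Let (S,*,n) be a two-dimensional symmetric composition algebra over a field k and let S = ⊕_{g∈G} S_g be a nontrivial grading by a group G (i.e., S_1 ≠ S, where S_1 is the identity component). Then exactly one of the following holds: (i) the characteristic of k is ≠ 2, and there is an element g ∈ G of order 2 such that S = S_1 ⊕ S_g, S_1 = ke for a para-unit e of S, and S_g = (S_1)^⊥ with respect to the polar form; or (ii) there is an element g ∈ G of order 3 such that S_1 = 0, S = S_g ⊕ S_{g²}, S_g = kx for an element x with n(x) = 0 and n(x, x*x) ≠ 0, and S_{g²} = k(x*x); in particular the norm n is isotropic. -/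

import Mathlib

open QuadraticMap

section aux
variable {k : Type*} [Field k] {S : Type*} [AddCommGroup S] [Module k S]
  (mul : S →ₗ[k] S →ₗ[k] S) (n : QuadraticForm k S)

lemma polar_mul_l (hcomp : ∀ x y : S, n (mul x y) = n x * n y) (x y z : S) :
    polar n (mul x y) (mul x z) = n x * polar n y z := by
  simp only [polar, ← map_add (mul x), hcomp]; ring

lemma polar_mul_r (hcomp : ∀ x y : S, n (mul x y) = n x * n y) (x y z : S) :
    polar n (mul x z) (mul y z) = polar n x y * n z := by
  have : mul x z + mul y z = mul (x + y) z := by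
    rw [map_add]; rfl
  simp only [polar, this, hcomp]; ring

variable (hnondeg : ∀ x : S, (∀ y : S, polar n x y = 0) → x = 0)
  (hcomp : ∀ x y : S, n (mul x y) = n x * n y)
  (hassoc : ∀ x y z : S, polar n (mul x y) z = polar n x (mul y z))

include hnondeg hcomp hassoc

lemma lmul_rmul (x y : S) : mul (mul x y) x = n x • y := by
  apply eq_of_sub_eq_zero; apply hnondeg; intro z
  rw [polar_sub_left, hassoc, polar_mul_l mul n hcomp, polar_smul_left, smul_eq_mul, sub_self]

lemma rmul_lmul (x y : S) : mul x (mul y x) = n x • y := by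
  apply eq_of_sub_eq_zero; apply hnondeg; intro z
  rw [polar_sub_left, polar_comm, ← hassoc, polar_mul_r mul n hcomp, polar_comm,
    polar_smul_left, smul_eq_mul, mul_comm, sub_self]

lemma lin7 (x y z : S) : mul (mul x y) z + mul (mul z y) x = polar n x z • y := by
  have h := lmul_rmul mul n hnondeg hcomp hassoc (x + z) y
  have hx := lmul_rmul mul n hnondeg hcomp hassoc x y
  have hz := lmul_rmul mul n hnondeg hcomp hassoc z y
  have hexp : mul (mul (x+z) y) (x+z)
      = mul (mul x y) x + (mul (mul x y) z + mul (mul z y) x) + mul (mul z y) z := by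
    simp only [map_add, LinearMap.add_apply]; abel
  have hn : n (x + z) = n x + n z + polar n x z := by
    rw [QuadraticMap.polar]; ring
  rw [hexp, hx, hz, hn, add_smul, add_smul] at h
  have h2 : mul (mul x y) z + mul (mul z y) x
      = (n x • y + n z • y + polar n x z • y) - n x • y - n z • y := by
    rw [← h]; abel
  rw [h2]; abel

lemma lin8 (x y z : S) : mul x (mul y z) + mul z (mul y x) = polar n x z • y := by
  have h := rmul_lmul mul n hnondeg hcomp hassoc (x + z) y
  have hx := rmul_lmul mul n hnondeg hcomp hassoc x y
  have hz := rmul_lmul mul n hnondeg hcomp hassoc z y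
  have hexp : mul (x+z) (mul y (x+z))
      = mul x (mul y x) + (mul x (mul y z) + mul z (mul y x)) + mul z (mul y z) := by
    simp only [map_add, LinearMap.add_apply]; abel
  have hn : n (x + z) = n x + n z + polar n x z := by
    rw [QuadraticMap.polar]; ring
  rw [hexp, hx, hz, hn, add_smul, add_smul] at h
  have h2 : mul x (mul y z) + mul z (mul y x)
      = (n x • y + n z • y + polar n x z • y) - n x • y - n z • y := by
    rw [← h]; abel
  rw [h2]; abel

end aux

theorem two_dim_symmetric_composition_gradings
    {k : Type*} [Field k] {S : Type*} [AddCommGroup S] [Module k S]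
    (mul : S →ₗ[k] S →ₗ[k] S) (n : QuadraticForm k S)
    (hnondeg : ∀ x : S, (∀ y : S, polar n x y = 0) → x = 0)
    (hcomp : ∀ x y : S, n (mul x y) = n x * n y)
    (hassoc : ∀ x y z : S, polar n (mul x y) z = polar n x (mul y z))
    (hdim : Module.finrank k S = 2)
    {G : Type*} [Group G] [DecidableEq G]
    (A : G → Submodule k S)
    (hdecomp : DirectSum.IsInternal A)
    (hgrmul : ∀ g h : G, ∀ x ∈ A g, ∀ y ∈ A h, mul x y ∈ A (g * h))
    (hnontriv : A 1 ≠ ⊤) :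
    Xor'
      (ringChar k ≠ 2 ∧ ∃ g : G, orderOf g = 2 ∧
        (∀ h : G, h ≠ 1 → h ≠ g → A h = ⊥) ∧
        ∃ e : S,
          (∀ x : S, mul e x = polar n e x • e - x ∧ mul x e = polar n e x • e - x) ∧
          A 1 = Submodule.span k {e} ∧
          (∀ z : S, z ∈ A g ↔ ∀ w ∈ A 1, polar n z w = 0))
      (∃ g : G, orderOf g = 3 ∧ A 1 = ⊥ ∧
        (∀ h : G, h ≠ g → h ≠ g ^ 2 → A h = ⊥) ∧
        ∃ x : S, n x = 0 ∧ polar n x (mul x x) ≠ 0 ∧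
          A g = Submodule.span k {x} ∧ A (g ^ 2) = Submodule.span k {mul x x} ∧
          ∃ z : S, z ≠ 0 ∧ n z = 0) := by
  have hFin : FiniteDimensional k S :=
    FiniteDimensional.of_finrank_pos (by rw [hdim]; norm_num)
  have hindep := hdecomp.submodule_iSupIndep
  have hsup := hdecomp.submodule_iSup_eq_top
  have hdisj : ∀ a b : G, a ≠ b → ∀ x : S, x ∈ A a → x ∈ A b → x = 0 := by
    intro a b hab x ha hb
    have hd : Disjoint (A a) (A b) := hindep.pairwiseDisjoint hab
    exact (Submodule.disjoint_def.mp hd) x ha hb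
  have hSnontriv : ∃ x : S, x ≠ (0:S) := by
    have : Nontrivial S := Module.nontrivial_of_finrank_pos (R := k) (by rw [hdim]; norm_num)
    exact exists_ne 0
  have hthree : ∀ a b c : G, a ≠ b → a ≠ c → b ≠ c →
      A a ≠ ⊥ → A b ≠ ⊥ → A c ≠ ⊥ → False := by
    intro a b c hab hac hbc ha hb hc
    obtain ⟨x, hx, hx0⟩ := Submodule.exists_mem_ne_zero_of_ne_bot ha
    obtain ⟨y, hy, hy0⟩ := Submodule.exists_mem_ne_zero_of_ne_bot hb
    obtain ⟨z, hz, hz0⟩ := Submodule.exists_mem_ne_zero_of_ne_bot hc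
    have hinj : Function.Injective ![a, b, c] := by
      intro i j hij
      fin_cases i <;> fin_cases j <;>
        simp only [Matrix.cons_val_zero, Matrix.cons_val_one, Matrix.head_cons,
          Matrix.cons_val_two, Matrix.tail_cons, Fin.mk_zero, Fin.mk_one, Fin.isValue] at hij ⊢ <;>
        first
          | rfl
          | exact absurd hij (by assumption)
          | exact absurd hij.symm (by assumption)
    have hli : LinearIndependent k ![x, y, z] := by
      refine (hindep.comp hinj).linearIndependent _ ?_ ?_
      · intro i; fin_cases i <;> simpa [Function.comp]
      · intro i; fin_cases i <;> simpa
    have := hli.fintype_card_le_finrank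
    rw [hdim] at this
    simp at this
  have key : ∀ (a b : G) (x y : S), a ≠ b → x ∈ A a → x ≠ 0 → y ∈ A b → y ≠ 0 →
      (∀ z : S, ∃ t s : k, z = t • x + s • y) ∧ A a = Submodule.span k {x} := by
    intro a b x y hab hx hx0 hy hy0
    have hinj : Function.Injective ![a, b] := by
      intro i j hij
      fin_cases i <;> fin_cases j <;>
        simp only [Matrix.cons_val_zero, Matrix.cons_val_one, Matrix.head_cons,
          Fin.mk_zero, Fin.mk_one, Fin.isValue] at hij ⊢ <;>
        first
          | rfl
          | exact absurd hij (by assumption)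
          | exact absurd hij.symm (by assumption)
    have hli : LinearIndependent k ![x, y] := by
      refine (hindep.comp hinj).linearIndependent _ ?_ ?_
      · intro i; fin_cases i <;> simpa [Function.comp]
      · intro i; fin_cases i <;> simpa
    have hspan : Submodule.span k (Set.range ![x, y]) = ⊤ :=
      hli.span_eq_top_of_card_eq_finrank (by simp [hdim])
    have hcoord : ∀ z : S, ∃ t s : k, z = t • x + s • y := by
      intro z
      have hz : z ∈ Submodule.span k ({x, y} : Set S) := by
        have hr : (Set.range ![x, y]) = {x, y} := by
          simp [Matrix.range_cons, Matrix.range_empty, Set.pair_comm]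
        rw [← hr, hspan]; trivial
      obtain ⟨t, s, h⟩ := Submodule.mem_span_pair.mp hz
      exact ⟨t, s, h.symm⟩
    refine ⟨hcoord, le_antisymm ?_ ?_⟩
    · intro z hz
      obtain ⟨t, s, rfl⟩ := hcoord z
      have hsy : s • y = 0 := by
        refine hdisj b a (Ne.symm hab) _ (Submodule.smul_mem _ _ hy) ?_
        have h2 : s • y = (t • x + s • y) - t • x := by abel
        rw [h2]
        exact Submodule.sub_mem _ hz (Submodule.smul_mem _ _ hx)
      rw [hsy, add_zero]
      exact Submodule.mem_span_singleton.mpr ⟨t, rfl⟩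
    · rw [Submodule.span_le, Set.singleton_subset_iff]; exact hx
  have L7 := lin7 mul n hnondeg hcomp hassoc
  have Lrl := lmul_rmul mul n hnondeg hcomp hassoc
  have Llr := rmul_lmul mul n hnondeg hcomp hassoc
  obtain ⟨x0, hx00⟩ := hSnontriv
  by_cases hA1 : A 1 = ⊥
  · -- Case B : trivial identity component
    have hiso : ∀ (c : G) (x : S), x ∈ A c → x ≠ 0 → n x = 0 := by
      intro c x hx hx0
      by_contra hn
      have hxx : mul x x ∈ A (c * c) := hgrmul c c x hx x hx
      have h3 : mul (mul x x) x ∈ A (c * c * c) := hgrmul _ c _ hxx x hx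
      have heq : mul (mul x x) x = n x • x := Lrl x x
      by_cases hcc : c * c * c = c
      · have h1 : c * c = 1 := mul_right_cancel (b := c) (by rw [hcc, one_mul])
        rw [h1, hA1] at hxx
        have h0 : mul x x = 0 := hxx
        rw [h0] at heq
        simp only [map_zero, LinearMap.zero_apply] at heq
        rcases smul_eq_zero.mp heq.symm with h | h
        · exact hn h
        · exact hx0 h
      · have hz := hdisj _ _ hcc _ (by rw [← heq]; exact h3) (Submodule.smul_mem _ _ hx)
        rcases smul_eq_zero.mp hz with h | h
        · exact hn h
        · exact hx0 h
    have hpolariso : ∀ (c : G) (x y : S), x ∈ A c → y ∈ A c → polar n x y = 0 := by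
      intro c x y hx hy
      have hs : ∀ z : S, z ∈ A c → n z = 0 := by
        intro z hz
        by_cases h0 : z = 0
        · simp [h0]
        · exact hiso c z hz h0
      rw [QuadraticMap.polar, hs _ hx, hs _ hy, hs _ (Submodule.add_mem _ hx hy)]
      ring
    have hexa : ∃ a, A a ≠ ⊥ := by
      by_contra h
      push_neg at h
      have htop : (⊤ : Submodule k S) ≤ ⊥ := by
        rw [← hsup]; exact iSup_le fun c => (h c).le
      exact hx00 ((Submodule.mem_bot k).mp (htop Submodule.mem_top))
    obtain ⟨a, ha⟩ := hexa
    have ha1 : a ≠ 1 := fun h => ha (h ▸ hA1)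
    obtain ⟨x, hx, hx0⟩ := Submodule.exists_mem_ne_zero_of_ne_bot ha
    have hexb : ∃ b, b ≠ a ∧ A b ≠ ⊥ := by
      by_contra h
      push_neg at h
      have htopa : (⊤ : Submodule k S) ≤ A a := by
        rw [← hsup]
        refine iSup_le fun c => ?_
        by_cases hc : c = a
        · exact hc ▸ le_rfl
        · rw [h c hc]; exact bot_le
      apply hx00
      apply hnondeg
      intro y
      exact hpolariso a x0 y (htopa Submodule.mem_top) (htopa Submodule.mem_top)
    obtain ⟨b, hba, hb⟩ := hexb
    obtain ⟨y, hy, hy0⟩ := Submodule.exists_mem_ne_zero_of_ne_bot hb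
    have hsupp : ∀ c, c ≠ a → c ≠ b → A c = ⊥ := by
      intro c h1 h2
      by_contra hc
      exact hthree a b c (Ne.symm hba) (Ne.symm h1) (Ne.symm h2) ha hb hc
    obtain ⟨hcoord, hAa⟩ := key a b x y (Ne.symm hba) hx hx0 hy hy0
    obtain ⟨hcoord', hAb⟩ := key b a y x hba hy hy0 hx hx0
    have hpxx : polar n x x = 0 := hpolariso a x x hx hx
    have hpxy : polar n x y ≠ 0 := by
      intro h0
      apply hx0
      apply hnondeg
      intro z
      obtain ⟨t, s, rfl⟩ := hcoord z
      rw [polar_add_right, polar_smul_right, polar_smul_right, hpxx, h0]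
      simp
    have h7 : mul (mul x x) y + mul (mul y x) x = polar n x y • x := L7 x x y
    have hbinv : b = a⁻¹ := by
      by_contra hbne
      by_cases haa : a * a = 1
      · have hxxmem : mul x x ∈ A 1 := by rw [← haa]; exact hgrmul a a x hx x hx
        rw [hA1] at hxxmem
        have hxx0 : mul x x = 0 := hxxmem
        have h7' : mul (mul y x) x = polar n x y • x := by
          rw [hxx0] at h7
          simpa using h7
        have hmemb : polar n x y • x ∈ A b := by
          rw [← h7']
          have h1 : mul y x ∈ A (b * a) := hgrmul b a y hy x hx
          have h2 : mul (mul y x) x ∈ A (b * a * a) := hgrmul _ a _ h1 x hx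
          rwa [mul_assoc, haa, mul_one] at h2
        have hz := hdisj b a hba _ hmemb (Submodule.smul_mem _ _ hx)
        rcases smul_eq_zero.mp hz with h | h
        · exact hpxy h
        · exact hx0 h
      · have h1 : a * a * b ≠ a := by
          intro h
          apply hbne
          have h' : a * (a * b) = a * 1 := by rw [← mul_assoc, h, mul_one]
          exact eq_inv_of_mul_eq_one_right (mul_left_cancel h')
        have h2 : a * a * b ≠ b := by
          intro h
          exact haa (mul_right_cancel (b := b) (by rw [h, one_mul]))
        have h3 : b * a * a ≠ a := by
          intro h
          apply hbne
          have h' : b = a * (a * a)⁻¹ := eq_mul_inv_of_mul_eq (by rw [← mul_assoc]; exact h)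
          rw [h']
          group
        have h4 : b * a * a ≠ b := by
          intro h
          apply haa
          have h' : b * (a * a) = b * 1 := by rw [← mul_assoc, h, mul_one]
          exact mul_left_cancel h'
        have hu : mul (mul x x) y = 0 := by
          have hm : mul (mul x x) y ∈ A (a * a * b) := hgrmul _ b _ (hgrmul a a x hx x hx) y hy
          rw [hsupp _ h1 h2] at hm
          exact hm
        have hv : mul (mul y x) x = 0 := by
          have hm : mul (mul y x) x ∈ A (b * a * a) := hgrmul _ a _ (hgrmul b a y hy x hx) x hx
          rw [hsupp _ h3 h4] at hm
          exact hm
        rw [hu, hv, zero_add] at h7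
        rcases smul_eq_zero.mp h7.symm with h | h
        · exact hpxy h
        · exact hx0 h
    have hyx : mul y x = 0 := by
      have hm : mul y x ∈ A (b * a) := hgrmul b a y hy x hx
      rw [hbinv, inv_mul_cancel, hA1] at hm
      exact hm
    have h7' : mul (mul x x) y = polar n x y • x := by
      rw [hyx] at h7
      simpa using h7
    have hxxne : mul x x ≠ 0 := by
      intro h
      rw [h] at h7'
      simp only [map_zero, LinearMap.zero_apply] at h7'
      rcases smul_eq_zero.mp h7'.symm with h' | h'
      · exact hpxy h'
      · exact hx0 h'
    have haab : a * a = b := by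
      by_contra hne
      have haaa : a * a ≠ a := fun h => ha1 (mul_left_cancel (a := a) (by rw [h, mul_one]))
      have hm : mul x x ∈ A (a * a) := hgrmul a a x hx x hx
      rw [hsupp _ haaa hne] at hm
      exact hxxne hm
    have ha3 : a ^ 3 = 1 := by
      have haainv : a * a = a⁻¹ := by rw [haab, hbinv]
      calc a ^ 3 = a * a * a := by rw [pow_succ, pow_two]
        _ = a⁻¹ * a := by rw [haainv]
        _ = 1 := inv_mul_cancel a
    have horder : orderOf a = 3 := orderOf_eq_prime ha3 ha1
    have ha2b : a ^ 2 = b := by rw [pow_two, haab]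
    have hxxb : mul x x ∈ Submodule.span k {y} := by
      rw [← hAb, ← haab]
      exact hgrmul a a x hx x hx
    obtain ⟨r, hr⟩ := Submodule.mem_span_singleton.mp hxxb
    have hr0 : r ≠ 0 := by
      intro h
      apply hxxne
      rw [← hr, h, zero_smul]
    have hA2span : A (a ^ 2) = Submodule.span k {mul x x} := by
      rw [ha2b, hAb, ← hr]
      exact (Submodule.span_singleton_smul_eq (IsUnit.mk0 r hr0) y).symm
    have hpxxx : polar n x (mul x x) ≠ 0 := by
      rw [← hr, polar_smul_right, smul_eq_mul]
      exact mul_ne_zero hr0 hpxy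
    have hsupp' : ∀ h : G, h ≠ a → h ≠ a ^ 2 → A h = ⊥ := by
      intro c h1 h2
      exact hsupp c h1 (by rwa [← ha2b])
    refine Or.inr ⟨⟨a, horder, hA1, hsupp', x, hiso a x hx hx0, hpxxx, hAa, hA2span,
      x, hx0, hiso a x hx hx0⟩, ?_⟩
    rintro ⟨-, g', -, -, e, hpara, hspan1, -⟩
    rw [hA1] at hspan1
    have he0 : e = 0 := by
      have hm : e ∈ Submodule.span k ({e} : Set S) := Submodule.mem_span_singleton_self e
      rw [← hspan1] at hm
      exact (Submodule.mem_bot k).mp hm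
    have hpx := (hpara x0).1
    rw [he0] at hpx
    simp only [map_zero, LinearMap.zero_apply, polar_zero_left, smul_zero, zero_sub] at hpx
    exact hx00 (neg_eq_zero.mp hpx.symm)
  · -- Case A : nontrivial identity component
    obtain ⟨e', he'A, he'0⟩ := Submodule.exists_mem_ne_zero_of_ne_bot hA1
    have hexg : ∃ g, g ≠ 1 ∧ A g ≠ ⊥ := by
      by_contra h
      push_neg at h
      apply hnontriv
      have htop : (⊤ : Submodule k S) ≤ A 1 := by
        rw [← hsup]
        refine iSup_le fun c => ?_
        by_cases hc : c = 1
        · exact hc ▸ le_rfl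
        · rw [h c hc]; exact bot_le
      exact top_le_iff.mp htop
    obtain ⟨g, hg1, hgb⟩ := hexg
    obtain ⟨w, hwA, hw0⟩ := Submodule.exists_mem_ne_zero_of_ne_bot hgb
    have h1g : (1:G) ≠ g := Ne.symm hg1
    have hsupp : ∀ c, c ≠ 1 → c ≠ g → A c = ⊥ := by
      intro c h1 h2
      by_contra hc
      exact hthree 1 g c h1g (Ne.symm h1) (Ne.symm h2) hA1 hgb hc
    obtain ⟨hcoord, hA1span'⟩ := key 1 g e' w h1g he'A he'0 hwA hw0
    have horth : ∀ u, u ∈ A g → polar n e' u = 0 := by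
      intro u hu
      have hm0 : mul e' e' ∈ A 1 := by simpa using hgrmul 1 1 e' he'A e' he'A
      have hm1 : mul u e' ∈ A g := by simpa using hgrmul g 1 u hu e' he'A
      have h1 : mul (mul e' e') u ∈ A g := by simpa using hgrmul 1 g _ hm0 u hu
      have h2 : mul (mul u e') e' ∈ A g := by simpa using hgrmul g 1 _ hm1 e' he'A
      have h7 := L7 e' e' u
      have hmem : polar n e' u • e' ∈ A g := by
        rw [← h7]; exact Submodule.add_mem _ h1 h2
      have hz := hdisj g 1 hg1 _ hmem (Submodule.smul_mem _ _ he'A)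
      rcases smul_eq_zero.mp hz with h | h
      · exact h
      · exact absurd h he'0
    have hwgen : ∀ u, u ∈ A g → polar n u e' = 0 := fun u hu => by
      rw [polar_comm]; exact horth u hu
    have hpee : polar n e' e' ≠ 0 := by
      intro h0
      apply he'0
      apply hnondeg
      intro z
      obtain ⟨t, s, rfl⟩ := hcoord z
      rw [polar_add_right, polar_smul_right, polar_smul_right, h0, horth w hwA]
      simp
    have hps : polar n e' e' = 2 * n e' := by
      rw [polar_self, two_nsmul, two_mul]
    have h2k : (2:k) ≠ 0 := fun h2 => hpee (by rw [hps, h2, zero_mul])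
    have hne' : n e' ≠ 0 := fun h => hpee (by rw [hps, h, mul_zero])
    have hchar : ringChar k ≠ 2 := by
      intro h
      apply h2k
      have hcast := ringChar.Nat.cast_ringChar (R := k)
      rw [h] at hcast
      exact_mod_cast hcast
    have hee'mem : mul e' e' ∈ Submodule.span k {e'} := by
      rw [← hA1span']
      simpa using hgrmul 1 1 e' he'A e' he'A
    obtain ⟨c, hc⟩ := Submodule.mem_span_singleton.mp hee'mem
    have hc2 : c * c = n e' := by
      have h := Lrl e' e'
      have h2 : mul (mul e' e') e' = (c * c) • e' := by
        rw [← hc, LinearMap.map_smul₂, ← hc, smul_smul]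
      rw [h2] at h
      exact smul_left_injective k he'0 h
    have hcne : c ≠ 0 := by
      intro h
      apply hne'
      rw [← hc2, h, mul_zero]
    obtain ⟨e, hedef⟩ : ∃ e : S, e = c⁻¹ • e' := ⟨_, rfl⟩
    have heA : e ∈ A 1 := by rw [hedef]; exact Submodule.smul_mem _ _ he'A
    have he0 : e ≠ 0 := by rw [hedef]; exact smul_ne_zero (inv_ne_zero hcne) he'0
    have he'e : e' = c • e := by rw [hedef, smul_smul, mul_inv_cancel₀ hcne, one_smul]
    have hA1e : A 1 = Submodule.span k {e} := by
      rw [hA1span', hedef]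
      exact (Submodule.span_singleton_smul_eq (IsUnit.mk0 _ (inv_ne_zero hcne)) e').symm
    have hee : mul e e = e := by
      rw [hedef, LinearMap.map_smul₂, _root_.map_smul, ← hc, smul_smul, smul_smul]
      congr 1
      field_simp
    have hnee : n e = 1 := by
      rw [hedef, QuadraticMap.map_smul, ← hc2, smul_eq_mul]
      field_simp
    have hbew : ∀ u, u ∈ A g → polar n e u = 0 := fun u hu => by
      rw [hedef, polar_smul_left, horth u hu, smul_zero]
    have hnw : n w ≠ 0 := by
      intro hw
      apply hw0
      apply hnondeg
      intro z
      obtain ⟨t, s, rfl⟩ := hcoord z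
      rw [polar_add_right, polar_smul_right, polar_smul_right, hwgen w hwA, polar_self, hw]
      simp
    have hgg : g * g = 1 := by
      by_contra hne
      have hggg : g * g ≠ g := fun h => hg1 (mul_left_cancel (a := g) (by rw [h, mul_one]))
      have hm : mul w w ∈ A (g * g) := hgrmul g g w hwA w hwA
      rw [hsupp _ hne hggg] at hm
      have h0 : mul w w = 0 := hm
      have h := Lrl w w
      rw [h0] at h
      simp only [map_zero, LinearMap.zero_apply] at h
      rcases smul_eq_zero.mp h.symm with h' | h'
      · exact hnw h'
      · exact hw0 h'
    have horder : orderOf g = 2 := orderOf_eq_prime (by rw [pow_two]; exact hgg) hg1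
    have hwwmem : mul w w ∈ Submodule.span k {e} := by
      rw [← hA1e, ← hgg]
      exact hgrmul g g w hwA w hwA
    obtain ⟨s, hs⟩ := Submodule.mem_span_singleton.mp hwwmem
    have hs0 : s ≠ 0 := by
      intro h
      apply hnw
      have h' := Lrl w w
      rw [← hs, h, zero_smul] at h'
      simp only [map_zero, LinearMap.zero_apply] at h'
      rcases smul_eq_zero.mp h'.symm with h'' | h''
      · exact h''
      · exact absurd h'' hw0
    have hew : mul e w = (s⁻¹ * n w) • w := by
      have h := Lrl w w
      rw [← hs, LinearMap.map_smul₂] at h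
      have h2 := congrArg (fun z => s⁻¹ • z) h
      simpa [smul_smul, inv_mul_cancel₀ hs0] using h2
    have hwe : mul w e = (s⁻¹ * n w) • w := by
      have h := Llr w w
      rw [← hs, _root_.map_smul] at h
      have h2 := congrArg (fun z => s⁻¹ • z) h
      simpa [smul_smul, inv_mul_cancel₀ hs0] using h2
    have hlam : s⁻¹ * n w = -1 := by
      have h7 := L7 e w w
      rw [hew, hbew w hwA, zero_smul, LinearMap.map_smul₂, ← hs, LinearMap.map_smul₂,
        hee] at h7
      have h7' : ((s⁻¹ * n w) * s + s) • e = 0 := by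
        rw [add_smul, mul_smul]; exact h7
      have hcoeff : (s⁻¹ * n w) * s + s = 0 := by
        rcases smul_eq_zero.mp h7' with h | h
        · exact h
        · exact absurd h he0
      have hcs : (s⁻¹ * n w) * s = n w := by
        rw [mul_comm (s⁻¹) (n w), mul_assoc, inv_mul_cancel₀ hs0, mul_one]
      rw [hcs] at hcoeff
      have hnws : n w = -s := eq_neg_of_add_eq_zero_left hcoeff
      rw [hnws, mul_neg, inv_mul_cancel₀ hs0]
    have hew' : mul e w = -w := by rw [hew, hlam, neg_one_smul]
    have hwe' : mul w e = -w := by rw [hwe, hlam, neg_one_smul]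
    have hpe2 : polar n e e = 2 := by
      rw [polar_self, hnee]
      norm_num
    have hcoord2 : ∀ z : S, ∃ t u : k, z = t • e + u • w := by
      intro z
      obtain ⟨t, u, rfl⟩ := hcoord z
      exact ⟨t * c, u, by rw [he'e, smul_smul]⟩
    have hpara : ∀ x : S, mul e x = polar n e x • e - x ∧ mul x e = polar n e x • e - x := by
      intro x
      obtain ⟨t, u, rfl⟩ := hcoord2 x
      have hp : polar n e (t • e + u • w) = 2 * t := by
        rw [polar_add_right, polar_smul_right, polar_smul_right, hpe2, hbew w hwA]
        simp [smul_eq_mul]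
        ring
      constructor
      · rw [map_add, _root_.map_smul, _root_.map_smul, hee, hew', hp]
        module
      · have hx : mul (t • e + u • w) e = t • mul e e + u • mul w e := by
          simp [LinearMap.map_smul₂]
        rw [hx, hee, hwe', hp]
        module
    have horthchar : ∀ z : S, z ∈ A g ↔ ∀ u ∈ A 1, polar n z u = 0 := by
      intro z
      constructor
      · intro hz u hu
        rw [hA1span'] at hu
        obtain ⟨r, hr⟩ := Submodule.mem_span_singleton.mp hu
        rw [← hr, polar_smul_right, hwgen z hz, smul_zero]
      · intro hz
        obtain ⟨t, u, rfl⟩ := hcoord z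
        have h := hz e' he'A
        rw [polar_add_left, polar_smul_left, polar_smul_left, hwgen w hwA, smul_zero,
          add_zero, smul_eq_mul] at h
        have ht : t = 0 := by
          rcases mul_eq_zero.mp h with h' | h'
          · exact h'
          · exact absurd h' hpee
        rw [ht, zero_smul, zero_add]
        exact Submodule.smul_mem _ _ hwA
    refine Or.inl ⟨⟨hchar, g, horder, hsupp, e, hpara, hA1e, horthchar⟩, ?_⟩
    rintro ⟨g', -, hbot, -⟩
    exact hA1 hbot
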